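/- Fix the standard division setup in k[[x]]: let ≺ be a local monomial order on ℕ^n, g₁,…,g_r ∈ k[[x]] nonzero, and define Δ₁ = exp_≺(g₁) + ℕ^n, Δ_j = (exp_≺(g_j) + ℕ^n) \ (Δ₁ ∪ ⋯ ∪ Δ_{j-1}) for j > 1, and Δ̄ = ℕ^n \ ⋃_j Δ_j. Then for the division f = Σ_j q_j g_j + R satisfying supp(q_j) + exp_≺(g_j) ⊆ Δ_j and supp(R) ⊆ Δ̄, the quotients and remainder are unique: if (q_j, R) and (q'_j, R') both satisfy these conditions for the same f, then q_j = q'_j for all j and R = R'. -/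

import Mathlib

noncomputable section

/-- The region `Δ_j = (exp(g_j) + ℕ^n) \ (Δ_1 ∪ ⋯ ∪ Δ_{j-1})` of the partition of `ℕ^n`
associated with leading exponents `e j`. -/
def DeltaJ {n r : ℕ} (e : Fin r → (Fin n →₀ ℕ)) (j : Fin r) : Set (Fin n →₀ ℕ) :=
  {β | (∃ γ, β = e j + γ) ∧ ∀ j' : Fin r, j' < j → ¬ ∃ γ, β = e j' + γ}

/-- The remainder region `Δ̄ = ℕ^n \ ⋃_j Δ_j`. -/
def DeltaBar {n r : ℕ} (e : Fin r → (Fin n →₀ ℕ)) : Set (Fin n →₀ ℕ) :=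
  {β | ∀ j : Fin r, β ∉ DeltaJ e j}

theorem exists_prec_max {α : Type*} (prec : α → α → Prop)
    (htotal : ∀ a b, prec a b ∨ a = b ∨ prec b a)
    (htrans : ∀ a b c, prec a b → prec b c → prec a c)
    (s : Finset α) (hs : s.Nonempty) : ∃ b ∈ s, ∀ a ∈ s, a = b ∨ prec a b := by
  classical
  induction s using Finset.induction_on with
  | empty => simp at hs
  | @insert x s hx ih =>
    rcases s.eq_empty_or_nonempty with rfl | hne
    · exact ⟨x, by simp, by simp⟩
    · obtain ⟨b, hb, hbmax⟩ := ih hne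
      rcases htotal x b with hxb | rfl | hbx
      · refine ⟨b, Finset.mem_insert_of_mem hb, fun a ha => ?_⟩
        rcases Finset.mem_insert.mp ha with rfl | ha
        · exact Or.inr hxb
        · exact hbmax a ha
      · refine ⟨x, Finset.mem_insert_self _ _, fun a ha => ?_⟩
        rcases Finset.mem_insert.mp ha with rfl | ha
        · exact Or.inl rfl
        · exact hbmax a ha
      · refine ⟨x, Finset.mem_insert_self _ _, fun a ha => ?_⟩
        rcases Finset.mem_insert.mp ha with rfl | ha
        · exact Or.inl rfl
        · rcases hbmax a ha with rfl | h
          · exact Or.inr hbx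
          · exact Or.inr (htrans _ _ _ h hbx)

theorem prec_add_strict {n : ℕ} (prec : (Fin n →₀ ℕ) → (Fin n →₀ ℕ) → Prop)
    (htrans : ∀ a b c, prec a b → prec b c → prec a c)
    (hadd : ∀ a b c, prec a b → prec (c + a) (c + b))
    {a b α β : Fin n →₀ ℕ} (ha : a = α ∨ prec a α) (hb : b = β ∨ prec b β)
    (hne : ¬(a = α ∧ b = β)) : prec (a + b) (α + β) := by
  rcases ha with rfl | ha
  · rcases hb with rfl | hb
    · exact absurd ⟨rfl, rfl⟩ hne
    · exact hadd _ _ _ hb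
  · rcases hb with rfl | hb
    · have h1 := hadd a α b ha
      rw [add_comm b a, add_comm b α] at h1
      exact h1
    · have h1 := hadd a α b ha
      rw [add_comm b a, add_comm b α] at h1
      exact htrans _ _ _ h1 (hadd b β α hb)

theorem prod_leading {n : ℕ} {K : Type*} [Field K]
    (prec : (Fin n →₀ ℕ) → (Fin n →₀ ℕ) → Prop)
    (hirr : ∀ a, ¬ prec a a)
    (htrans : ∀ a b c, prec a b → prec b c → prec a c)
    (hadd : ∀ a b c, prec a b → prec (c + a) (c + b))
    {p g : MvPowerSeries (Fin n) K} {α β : Fin n →₀ ℕ}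
    (hp1 : MvPowerSeries.coeff (R := K) α p ≠ 0)
    (hp2 : ∀ γ, MvPowerSeries.coeff (R := K) γ p ≠ 0 → γ = α ∨ prec γ α)
    (hg1 : MvPowerSeries.coeff (R := K) β g ≠ 0)
    (hg2 : ∀ γ, MvPowerSeries.coeff (R := K) γ g ≠ 0 → γ = β ∨ prec γ β) :
    MvPowerSeries.coeff (R := K) (α + β) (p * g) ≠ 0 ∧
      ∀ γ, MvPowerSeries.coeff (R := K) γ (p * g) ≠ 0 → γ = α + β ∨ prec γ (α + β) := by
  constructor
  · rw [MvPowerSeries.coeff_mul, Finset.sum_eq_single (α, β)]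
    · exact mul_ne_zero hp1 hg1
    · intro ab hab hne
      by_contra hz
      have h1 : MvPowerSeries.coeff (R := K) ab.1 p ≠ 0 := fun h => hz (by simp [h])
      have h2 : MvPowerSeries.coeff (R := K) ab.2 g ≠ 0 := fun h => hz (by simp [h])
      have hsum : ab.1 + ab.2 = α + β := Finset.HasAntidiagonal.mem_antidiagonal.mp hab
      have hstr : prec (ab.1 + ab.2) (α + β) := by
        refine prec_add_strict prec htrans hadd (hp2 _ h1) (hg2 _ h2) ?_
        rintro ⟨h3, h4⟩
        exact hne (Prod.ext h3 h4)
      rw [hsum] at hstr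
      exact hirr _ hstr
    · intro h
      exact absurd (by simp : (α, β) ∈ Finset.HasAntidiagonal.antidiagonal (α + β)) h
  · intro γ hγ
    rw [MvPowerSeries.coeff_mul] at hγ
    obtain ⟨ab, hab, hne0⟩ := Finset.exists_ne_zero_of_sum_ne_zero hγ
    have h1 : MvPowerSeries.coeff (R := K) ab.1 p ≠ 0 := fun h => hne0 (by simp [h])
    have h2 : MvPowerSeries.coeff (R := K) ab.2 g ≠ 0 := fun h => hne0 (by simp [h])
    have hsum : ab.1 + ab.2 = γ := Finset.HasAntidiagonal.mem_antidiagonal.mp hab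
    by_cases hcase : ab.1 = α ∧ ab.2 = β
    · left; rw [← hsum, hcase.1, hcase.2]
    · right
      rw [← hsum]
      exact prec_add_strict prec htrans hadd (hp2 _ h1) (hg2 _ h2) hcase

theorem DeltaJ_disjoint {n r : ℕ} (e : Fin r → (Fin n →₀ ℕ)) {j j' : Fin r} (h : j ≠ j')
    {β : Fin n →₀ ℕ} (h1 : β ∈ DeltaJ e j) (h2 : β ∈ DeltaJ e j') : False := by
  rcases lt_or_gt_of_ne h with hlt | hlt
  · exact h2.2 j hlt h1.1
  · exact h1.2 j' hlt h2.1

/-- Uniqueness of quotients and remainder in the division of formal power series with respect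
to a local monomial order `≺`: if `f = Σ_j q_j g_j + R = Σ_j q'_j g_j + R'` with
`supp(q_j) + exp(g_j) ⊆ Δ_j` (same for `q'`), `supp(R), supp(R') ⊆ Δ̄`, then `q = q'` and
`R = R'`. -/
theorem division_uniqueness {n r : ℕ} {K : Type*} [Field K]
    (prec : (Fin n →₀ ℕ) → (Fin n →₀ ℕ) → Prop)
    (htotal : ∀ a b, prec a b ∨ a = b ∨ prec b a)
    (hirr : ∀ a, ¬ prec a a)
    (htrans : ∀ a b c, prec a b → prec b c → prec a c)
    (hadd : ∀ a b c, prec a b → prec (c + a) (c + b))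
    (hloc : ∀ a, a ≠ 0 → prec a 0)
    (hmax : ∀ f : MvPowerSeries (Fin n) K, f ≠ 0 → ∃ β, MvPowerSeries.coeff (R := K) β f ≠ 0 ∧
      ∀ γ, MvPowerSeries.coeff (R := K) γ f ≠ 0 → γ = β ∨ prec γ β)
    (g : Fin r → MvPowerSeries (Fin n) K) (hg : ∀ j, g j ≠ 0)
    (e : Fin r → (Fin n →₀ ℕ))
    (he : ∀ j, MvPowerSeries.coeff (R := K) (e j) (g j) ≠ 0 ∧
      ∀ γ, MvPowerSeries.coeff (R := K) γ (g j) ≠ 0 → γ = e j ∨ prec γ (e j))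
    (f R R' : MvPowerSeries (Fin n) K) (q q' : Fin r → MvPowerSeries (Fin n) K)
    (hdiv : f = ∑ j, q j * g j + R)
    (hdiv' : f = ∑ j, q' j * g j + R')
    (hq : ∀ j, ∀ β, MvPowerSeries.coeff (R := K) β (q j) ≠ 0 → (β + e j) ∈ DeltaJ e j)
    (hq' : ∀ j, ∀ β, MvPowerSeries.coeff (R := K) β (q' j) ≠ 0 → (β + e j) ∈ DeltaJ e j)
    (hR : ∀ β, MvPowerSeries.coeff (R := K) β R ≠ 0 → β ∈ DeltaBar e)
    (hR' : ∀ β, MvPowerSeries.coeff (R := K) β R' ≠ 0 → β ∈ DeltaBar e) :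
    q = q' ∧ R = R' := by
  classical
  set d : Fin r → MvPowerSeries (Fin n) K := fun j => q j - q' j with hd_def
  set S : MvPowerSeries (Fin n) K := R - R' with hS_def
  have h1 : ∑ j, q j * g j + R = ∑ j, q' j * g j + R' := hdiv.symm.trans hdiv'
  have hT : ∑ j, d j * g j + S = 0 := by
    simp only [hd_def, hS_def, sub_mul, Finset.sum_sub_distrib]
    linear_combination h1
  -- supports of d j and S land in the right regions
  have hmemJ : ∀ j β, MvPowerSeries.coeff (R := K) β (d j) ≠ 0 → (β + e j) ∈ DeltaJ e j := by
    intro j β hb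
    have : MvPowerSeries.coeff (R := K) β (q j) ≠ 0 ∨ MvPowerSeries.coeff (R := K) β (q' j) ≠ 0 := by
      by_contra h
      push_neg at h
      apply hb
      simp [hd_def, map_sub, h.1, h.2]
    rcases this with h | h
    exacts [hq j _ h, hq' j _ h]
  have hmemS : ∀ β, MvPowerSeries.coeff (R := K) β S ≠ 0 → β ∈ DeltaBar e := by
    intro β hb
    have : MvPowerSeries.coeff (R := K) β R ≠ 0 ∨ MvPowerSeries.coeff (R := K) β R' ≠ 0 := by
      by_contra h
      push_neg at h
      apply hb
      simp [hS_def, map_sub, h.1, h.2]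
    rcases this with h | h
    exacts [hR _ h, hR' _ h]
  have key : (∀ j, d j = 0) ∧ S = 0 := by
    by_contra hcon
    choose! E hE1 hE2 using fun j (h : d j ≠ 0) => hmax (d j) h
    set J : Finset (Fin r) := Finset.univ.filter (fun j => d j ≠ 0) with hJ
    set SL : Finset (Fin n →₀ ℕ) :=
      if h : S = 0 then ∅ else {Classical.choose (hmax S h)} with hSL
    set L : Finset (Fin n →₀ ℕ) := J.image (fun j => E j + e j) ∪ SL with hL
    have hLne : L.Nonempty := by
      rcases not_and_or.mp hcon with h | h
      · push_neg at h
        obtain ⟨j, hj⟩ := h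
        exact ⟨E j + e j, Finset.mem_union_left _
          (Finset.mem_image_of_mem _ (by simp [hJ, hj]))⟩
      · refine ⟨Classical.choose (hmax S h), Finset.mem_union_right _ ?_⟩
        simp [hSL, h]
    obtain ⟨β, hβL, hβmax⟩ := exists_prec_max prec htotal htrans L hLne
    have h0 : ∑ j, MvPowerSeries.coeff (R := K) β (d j * g j) + MvPowerSeries.coeff (R := K) β S = 0 := by
      have := congrArg (MvPowerSeries.coeff (R := K) β) hT
      simpa [map_add] using this
    -- key step: a term with leader distinct from β has zero coefficient at β
    have hterm : ∀ j, d j ≠ 0 → E j + e j ≠ β → MvPowerSeries.coeff (R := K) β (d j * g j) = 0 := by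
      intro j hdj hne
      by_contra hnz
      have hprod := (prod_leading prec hirr htrans hadd (hE1 j hdj) (hE2 j hdj)
        (he j).1 (he j).2).2 β hnz
      have hLj : E j + e j ∈ L := Finset.mem_union_left _
        (Finset.mem_image_of_mem _ (by simp [hJ, hdj]))
      rcases hprod with heq | hpr
      · exact hne heq.symm
      · rcases hβmax _ hLj with heq | hpr2
        · exact hne heq
        · exact hirr β (htrans _ _ _ hpr hpr2)
    rcases Finset.mem_union.mp hβL with hβJ | hβSL
    · -- β is the leader of some d j0 * g j0
      obtain ⟨j0, hj0J, hj0β⟩ := Finset.mem_image.mp hβJ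
      have hdj0 : d j0 ≠ 0 := (Finset.mem_filter.mp hj0J).2
      have hj0Δ : β ∈ DeltaJ e j0 := hj0β ▸ hmemJ j0 (E j0) (hE1 j0 hdj0)
      have hSco : MvPowerSeries.coeff (R := K) β S = 0 := by
        by_contra hnz
        exact (hmemS β hnz) j0 hj0Δ
      have hsum : ∑ j, MvPowerSeries.coeff (R := K) β (d j * g j)
          = MvPowerSeries.coeff (R := K) β (d j0 * g j0) := by
        refine Finset.sum_eq_single j0 (fun j _ hne => ?_) (by simp)
        by_cases hdj : d j = 0
        · simp [hdj]
        · refine hterm j hdj ?_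
          intro heq
          have hjΔ : β ∈ DeltaJ e j := heq ▸ hmemJ j (E j) (hE1 j hdj)
          exact DeltaJ_disjoint e hne hjΔ hj0Δ
      have hnz0 : MvPowerSeries.coeff (R := K) β (d j0 * g j0) ≠ 0 := by
        rw [← hj0β]
        exact (prod_leading prec hirr htrans hadd (hE1 j0 hdj0) (hE2 j0 hdj0)
          (he j0).1 (he j0).2).1
      rw [hsum, hSco, add_zero] at h0
      exact hnz0 h0
    · -- β is the leader of S
      have hS0 : S ≠ 0 := by
        intro h
        rw [hSL] at hβSL
        simp [h] at hβSL
      have hβS : β = Classical.choose (hmax S hS0) := by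
        rw [hSL] at hβSL
        simpa [hS0] using hβSL
      obtain ⟨hSc, hSm⟩ := Classical.choose_spec (hmax S hS0)
      rw [← hβS] at hSc hSm
      have hβbar : β ∈ DeltaBar e := hmemS β hSc
      have hsum : ∑ j, MvPowerSeries.coeff (R := K) β (d j * g j) = 0 := by
        refine Finset.sum_eq_zero (fun j _ => ?_)
        by_cases hdj : d j = 0
        · simp [hdj]
        · refine hterm j hdj ?_
          intro heq
          exact hβbar j (heq ▸ hmemJ j (E j) (hE1 j hdj))
      rw [hsum, zero_add] at h0
      exact hSc h0
  refine ⟨funext fun j => sub_eq_zero.mp ?_, sub_eq_zero.mp key.2⟩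
  exact key.1 j
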